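/- Symmetry of the Dirichlet-to-Neumann operator: for all Schwartz functions φ₁, φ₂ : ℝ → ℂ, one has ∫_ℝ φ₁(x) (T_k φ₂)(x) dx = ∫_ℝ φ₂(x) (T_k φ₁)(x) dx (no complex conjugation on either side). -/

import Mathlib

open MeasureTheory

/-- The branch of the complex square root used for the upper half plane:
`ρ(w) := √((|w| + Re w)/2) + i √((|w| − Re w)/2)`; for `Im w ≥ 0` it satisfies
`ρ(w)² = w`, `Re ρ(w) ≥ 0` and `Im ρ(w) ≥ 0`. -/
noncomputable def rho (w : ℂ) : ℂ :=
  (Real.sqrt ((‖w‖ + w.re) / 2) : ℝ) +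
    Complex.I * (Real.sqrt ((‖w‖ - w.re) / 2) : ℝ)

/-- The Fourier transform `φ̂(ξ) = (2π)^{−1/2} ∫ e^{−ixξ} φ(x) dx` of a Schwartz function. -/
noncomputable def ft (φ : SchwartzMap ℝ ℂ) (ξ : ℝ) : ℂ :=
  ((Real.sqrt (2 * Real.pi) : ℝ) : ℂ)⁻¹ *
    ∫ x : ℝ, Complex.exp (-Complex.I * x * ξ) * φ x

/-- The Dirichlet-to-Neumann operator on Schwartz functions:
`(T_k φ)(x) = (2π)^{−1/2} ∫ i ρ(k²−ξ²) e^{ixξ} φ̂(ξ) dξ`. -/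
noncomputable def dtn (k : ℂ) (φ : SchwartzMap ℝ ℂ) (x : ℝ) : ℂ :=
  ((Real.sqrt (2 * Real.pi) : ℝ) : ℂ)⁻¹ *
    ∫ ξ : ℝ, Complex.I * rho (k ^ 2 - (ξ : ℂ) ^ 2) * Complex.exp (Complex.I * x * ξ) * ft φ ξ


lemma abs_rho (w : ℂ) : ‖rho w‖ = Real.sqrt ‖w‖ := by
  have h1 : 0 ≤ (‖w‖ + w.re) / 2 := by
    have := Complex.abs_re_le_norm w
    have := abs_le.1 this
    linarith [this.1]
  have h2 : 0 ≤ (‖w‖ - w.re) / 2 := by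
    have := Complex.abs_re_le_norm w
    have := abs_le.1 this
    linarith [this.2]
  rw [Complex.norm_def, Complex.normSq_apply]
  simp only [rho, Complex.add_re, Complex.ofReal_re, Complex.mul_re, Complex.I_re,
    Complex.ofReal_im, Complex.I_im, Complex.add_im, Complex.mul_im]
  rw [show (Real.sqrt ((‖w‖ + w.re) / 2) + (0 * Real.sqrt ((‖w‖ - w.re) / 2) - 1 * 0)) = Real.sqrt ((‖w‖ + w.re) / 2) by ring]
  rw [show (0 + (0 * 0 + 1 * Real.sqrt ((‖w‖ - w.re) / 2))) = Real.sqrt ((‖w‖ - w.re) / 2) by ring]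
  rw [Real.mul_self_sqrt h1, Real.mul_self_sqrt h2]
  congr 1
  ring

lemma rho_continuous : Continuous rho := by
  unfold rho
  apply Continuous.add
  · exact (Complex.continuous_ofReal.comp (Real.continuous_sqrt.comp
      (((continuous_norm.add Complex.continuous_re).div_const 2))))
  · exact continuous_const.mul (Complex.continuous_ofReal.comp (Real.continuous_sqrt.comp
      (((continuous_norm.sub Complex.continuous_re).div_const 2))))

lemma abs_rho_le (k : ℂ) (ξ : ℝ) :
    ‖rho (k ^ 2 - (ξ : ℂ) ^ 2)‖ ≤ ‖k‖ + |ξ| := by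
  rw [abs_rho]
  have h1 : ‖k ^ 2 - (ξ : ℂ) ^ 2‖ ≤ (‖k‖ + |ξ|) ^ 2 := by
    calc ‖k ^ 2 - (ξ : ℂ) ^ 2‖ ≤ ‖k ^ 2‖ + ‖(ξ:ℂ) ^ 2‖ :=
          norm_sub_le _ _
    _ = ‖k‖ ^ 2 + |ξ| ^ 2 := by
          rw [norm_pow, norm_pow, Complex.norm_real, Real.norm_eq_abs]
    _ ≤ (‖k‖ + |ξ|) ^ 2 := by nlinarith [norm_nonneg k, abs_nonneg ξ]
  calc Real.sqrt ‖k ^ 2 - (ξ : ℂ) ^ 2‖ ≤ Real.sqrt ((‖k‖ + |ξ|) ^ 2) :=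
        Real.sqrt_le_sqrt h1
  _ = ‖k‖ + |ξ| := Real.sqrt_sq (by positivity)

lemma ft_eq (φ : SchwartzMap ℝ ℂ) (ξ : ℝ) :
    ft φ ξ = ((Real.sqrt (2 * Real.pi) : ℝ) : ℂ)⁻¹ *
      (SchwartzMap.fourierTransformCLM ℂ φ) (ξ / (2 * Real.pi)) := by
  rw [ft]
  congr 1
  have h0 : ((SchwartzMap.fourierTransformCLM ℂ φ) : ℝ → ℂ) = FourierTransform.fourier (φ : ℝ → ℂ) :=
    rfl
  rw [h0, Real.fourier_real_eq_integral_exp_smul]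
  congr 1
  funext x
  rw [smul_eq_mul]
  congr 2
  have hπ : (Real.pi : ℝ) ≠ 0 := Real.pi_ne_zero
  have h : (-2 * Real.pi * x * (ξ / (2 * Real.pi))) = -(x * ξ) := by field_simp
  rw [h]
  push_cast
  ring

lemma ft_continuous (φ : SchwartzMap ℝ ℂ) : Continuous (ft φ) := by
  have : ft φ = fun ξ => ((Real.sqrt (2 * Real.pi) : ℝ) : ℂ)⁻¹ *
      (SchwartzMap.fourierTransformCLM ℂ φ) (ξ / (2 * Real.pi)) := funext (ft_eq φ)
  rw [this]
  exact continuous_const.mul ((SchwartzMap.fourierTransformCLM ℂ φ).continuous.comp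
    (continuous_id.div_const _))

lemma ft_integrable (φ : SchwartzMap ℝ ℂ) : Integrable (ft φ) := by
  have : ft φ = fun ξ => ((Real.sqrt (2 * Real.pi) : ℝ) : ℂ)⁻¹ *
      (SchwartzMap.fourierTransformCLM ℂ φ) (ξ / (2 * Real.pi)) := funext (ft_eq φ)
  rw [this]
  exact (((SchwartzMap.fourierTransformCLM ℂ φ).integrable).comp_div
    (by positivity : (2 * Real.pi) ≠ 0)).const_mul _

lemma abs_mul_ft_integrable (φ : SchwartzMap ℝ ℂ) :
    Integrable (fun ξ : ℝ => |ξ| * ‖ft φ ξ‖) := by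
  set ψ := SchwartzMap.fourierTransformCLM ℂ φ with hψ
  have h1 : Integrable (fun x : ℝ => ‖x‖ ^ 1 * ‖ψ x‖) := ψ.integrable_pow_mul volume 1
  have h2 : Integrable (fun ξ : ℝ => ‖ξ / (2 * Real.pi)‖ ^ 1 * ‖ψ (ξ / (2 * Real.pi))‖) :=
    h1.comp_div (by positivity : (2 * Real.pi) ≠ 0)
  have h3 := (h2.const_mul ((2 * Real.pi) * (Real.sqrt (2 * Real.pi))⁻¹))
  apply h3.congr
  filter_upwards with ξ
  rw [ft_eq]
  have hπ : (0:ℝ) < 2 * Real.pi := by positivity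
  simp only [pow_one, Real.norm_eq_abs, norm_mul, norm_inv, Complex.norm_real]
  rw [abs_div, abs_of_pos hπ, abs_of_nonneg (Real.sqrt_nonneg _)]
  rw [show ‖ψ (ξ / (2 * Real.pi))‖ = ‖ψ (ξ / (2 * Real.pi))‖ from rfl]
  field_simp

lemma g_continuous (k : ℂ) (φ : SchwartzMap ℝ ℂ) :
    Continuous (fun ξ : ℝ => Complex.I * rho (k ^ 2 - (ξ : ℂ) ^ 2) * ft φ ξ) := by
  apply Continuous.mul _ (ft_continuous φ)
  apply continuous_const.mul
  exact rho_continuous.comp (continuous_const.sub ((Complex.continuous_ofReal).pow 2))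

lemma g_integrable (k : ℂ) (φ : SchwartzMap ℝ ℂ) :
    Integrable (fun ξ : ℝ => Complex.I * rho (k ^ 2 - (ξ : ℂ) ^ 2) * ft φ ξ) := by
  have hb : Integrable (fun ξ : ℝ =>
      ‖k‖ * ‖ft φ ξ‖ + |ξ| * ‖ft φ ξ‖) := by
    apply Integrable.add _ (abs_mul_ft_integrable φ)
    exact ((ft_integrable φ).norm).const_mul _
  apply hb.mono' ((g_continuous k φ).aestronglyMeasurable)
  filter_upwards with ξ
  have h1 : ‖Complex.I * rho (k ^ 2 - (ξ : ℂ) ^ 2) * ft φ ξ‖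
      = ‖rho (k ^ 2 - (ξ : ℂ) ^ 2)‖ * ‖ft φ ξ‖ := by
    simp [map_mul]
  rw [h1, ← add_mul]
  exact mul_le_mul_of_nonneg_right (abs_rho_le k ξ) (norm_nonneg _)

lemma pairing (k : ℂ) (φ₁ φ₂ : SchwartzMap ℝ ℂ) :
    ∫ x : ℝ, φ₁ x * dtn k φ₂ x
      = ∫ ξ : ℝ, Complex.I * rho (k ^ 2 - (ξ : ℂ) ^ 2) * ft φ₂ ξ * ft φ₁ (-ξ) := by
  set c : ℂ := ((Real.sqrt (2 * Real.pi) : ℝ) : ℂ)⁻¹ with hc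
  set g : ℝ → ℂ := fun ξ => Complex.I * rho (k ^ 2 - (ξ : ℂ) ^ 2) * ft φ₂ ξ with hg
  have e1 : ∀ x : ℝ, φ₁ x * dtn k φ₂ x
      = ∫ ξ : ℝ, c * (φ₁ x * (g ξ * Complex.exp (Complex.I * x * ξ))) := by
    intro x
    rw [dtn, ← hc, ← mul_assoc, ← integral_const_mul]
    congr 1
    funext ξ
    simp only [hg]
    ring
  have hInt : Integrable
      (fun p : ℝ × ℝ => c * (φ₁ p.1 * (g p.2 * Complex.exp (Complex.I * p.1 * p.2))))
      (volume.prod volume) := by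
    have hb : Integrable (fun p : ℝ × ℝ => (‖c‖ * ‖φ₁ p.1‖) * ‖g p.2‖)
        (volume.prod volume) := by
      have h1 : Integrable (fun x : ℝ => ‖c‖ * ‖φ₁ x‖) := (φ₁.integrable.norm).const_mul _
      exact h1.mul_prod (g_integrable k φ₂).norm
    apply hb.mono'
    · apply Continuous.aestronglyMeasurable
      apply continuous_const.mul
      apply (φ₁.continuous.comp continuous_fst).mul
      apply ((g_continuous k φ₂).comp continuous_snd).mul
      exact Complex.continuous_exp.comp (by fun_prop)
    · filter_upwards with p
      have habs : ‖Complex.exp (Complex.I * p.1 * p.2)‖ = 1 := by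
        rw [Complex.norm_exp]
        simp [Complex.mul_re, Complex.mul_im]
      simp only [norm_mul, habs, mul_one]
      exact le_of_eq (by ring)
  calc ∫ x : ℝ, φ₁ x * dtn k φ₂ x
      = ∫ x : ℝ, ∫ ξ : ℝ, c * (φ₁ x * (g ξ * Complex.exp (Complex.I * x * ξ))) := by
        exact integral_congr_ae (Filter.Eventually.of_forall e1)
    _ = ∫ ξ : ℝ, ∫ x : ℝ, c * (φ₁ x * (g ξ * Complex.exp (Complex.I * x * ξ))) :=
        integral_integral_swap hInt
    _ = ∫ ξ : ℝ, g ξ * ft φ₁ (-ξ) := by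
        congr 1
        funext ξ
        calc ∫ x : ℝ, c * (φ₁ x * (g ξ * Complex.exp (Complex.I * x * ξ)))
            = ∫ x : ℝ, (g ξ * c) * (Complex.exp (Complex.I * x * ξ) * φ₁ x) := by
              congr 1; funext x; ring
          _ = (g ξ * c) * ∫ x : ℝ, Complex.exp (Complex.I * x * ξ) * φ₁ x :=
              integral_const_mul _ _
          _ = g ξ * ft φ₁ (-ξ) := by
              rw [ft, ← hc, mul_assoc]
              congr 2
              apply integral_congr_ae
              filter_upwards with x
              congr 1
              push_cast
              ring
    _ = ∫ ξ : ℝ, Complex.I * rho (k ^ 2 - (ξ : ℂ) ^ 2) * ft φ₂ ξ * ft φ₁ (-ξ) := rfl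

/-- Symmetry of the Dirichlet-to-Neumann operator: for all Schwartz functions `φ₁, φ₂`,
`∫ φ₁ (T_k φ₂) = ∫ φ₂ (T_k φ₁)` (no complex conjugation on either side). -/
theorem dtn_symm (k : ℂ) (hk : 0 ≤ (k ^ 2).im) (φ₁ φ₂ : SchwartzMap ℝ ℂ) :
    ∫ x : ℝ, φ₁ x * dtn k φ₂ x = ∫ x : ℝ, φ₂ x * dtn k φ₁ x := by
  rw [pairing k φ₁ φ₂, pairing k φ₂ φ₁]
  have key : ∀ ξ : ℝ, Complex.I * rho (k ^ 2 - (ξ : ℂ) ^ 2) * ft φ₂ ξ * ft φ₁ (-ξ)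
      = (fun η : ℝ => Complex.I * rho (k ^ 2 - (η : ℂ) ^ 2) * ft φ₁ η * ft φ₂ (-η)) (-ξ) := by
    intro ξ
    simp only [Complex.ofReal_neg, neg_sq, neg_neg]
    ring
  calc ∫ ξ : ℝ, Complex.I * rho (k ^ 2 - (ξ : ℂ) ^ 2) * ft φ₂ ξ * ft φ₁ (-ξ)
      = ∫ ξ : ℝ, (fun η : ℝ => Complex.I * rho (k ^ 2 - (η : ℂ) ^ 2) * ft φ₁ η * ft φ₂ (-η)) (-ξ) :=
        integral_congr_ae (Filter.Eventually.of_forall key)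
    _ = ∫ ξ : ℝ, Complex.I * rho (k ^ 2 - (ξ : ℂ) ^ 2) * ft φ₁ ξ * ft φ₂ (-ξ) :=
        integral_neg_eq_self
          (fun η : ℝ => Complex.I * rho (k ^ 2 - (η : ℂ) ^ 2) * ft φ₁ η * ft φ₂ (-η)) volume
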